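/- Let S be a right regular band of groups that is a monoid, and let c ∈ S. Then the set {s ∈ S : c ∈ s·S} is a submonoid of S: it contains the identity and is closed under multiplication. (Equivalently, the complement in S of the ideal of elements not J-above a given J-class is a subsemigroup.) -/

import Mathlib

/-- `spow s n` is the (n+1)-st power `s^(n+1)` of `s`, so that `spow s n` for `n : ℕ`
ranges over all positive powers of `s`. -/
def spow {S : Type*} [Semigroup S] (s : S) : ℕ → S
  | 0 => s
  | n + 1 => spow s n * s

lemma spow_eq {S : Type*} [Monoid S] (s : S) : ∀ n : ℕ, spow s n = s ^ (n + 1)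
  | 0 => by simp [spow]
  | n + 1 => by rw [spow, spow_eq s n, ← pow_succ]

lemma idem_of_pow_eq {S : Type*} [Monoid S] (s : S) (m D : ℕ) (hD : 1 ≤ D)
    (h : s ^ (m + 1) = s ^ (m + 1 + D)) :
    ∃ n : ℕ, spow s n * spow s n = spow s n := by
  have key : ∀ t : ℕ, m + 1 ≤ t → s ^ (t + D) = s ^ t := by
    intro t ht
    obtain ⟨j, rfl⟩ := Nat.exists_eq_add_of_le ht
    calc s ^ (m + 1 + j + D) = s ^ (m + 1 + D) * s ^ j := by
          rw [← pow_add]; ring_nf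
      _ = s ^ (m + 1) * s ^ j := by rw [← h]
      _ = s ^ (m + 1 + j) := by rw [← pow_add]
  set N := (m + 1) * D with hN
  have hN1 : 1 ≤ N := Nat.one_le_iff_ne_zero.2 (by positivity)
  have hNm : m + 1 ≤ N := Nat.le_mul_of_pos_right _ hD
  have claim : ∀ k : ℕ, s ^ (N + k * D) = s ^ N := by
    intro k
    induction k with
    | zero => simp
    | succ k ih =>
      have h2 : N + (k + 1) * D = (N + k * D) + D := by ring
      rw [h2, key _ (by omega), ih]
  refine ⟨N - 1, ?_⟩
  rw [spow_eq, Nat.sub_add_cancel hN1, ← pow_add]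
  have h3 : N + N = N + (m + 1) * D := by rw [← hN]
  rw [h3, claim]

/-- In a finite monoid, some positive power of every element is idempotent. -/
lemma spow_exists_idem {S : Type*} [Monoid S] [Finite S] (s : S) :
    ∃ n : ℕ, spow s n * spow s n = spow s n := by
  obtain ⟨m, n, hne, hmn⟩ :=
    Finite.exists_ne_map_eq_of_infinite (fun k : ℕ => s ^ (k + 1))
  rcases Nat.lt_or_gt_of_ne hne with h | h
  · obtain ⟨d, rfl⟩ := Nat.exists_eq_add_of_lt h
    exact idem_of_pow_eq s m (d + 1) (by omega) (by rw [hmn]; congr 1; omega)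
  · obtain ⟨d, rfl⟩ := Nat.exists_eq_add_of_lt h
    exact idem_of_pow_eq s n (d + 1) (by omega) (by rw [← hmn]; congr 1; omega)

/-- Left absorption: `t * s ∈ sS` for all `t, s`. -/
lemma left_mem {S : Type*} [Monoid S] [Finite S]
    (h1 : ∀ s : S, ∀ n : ℕ, spow s n * spow s n = spow s n → spow s n * s = s)
    (h2 : ∀ e : S, e * e = e → ∀ t : S, e * t * e = t * e)
    (t s : S) : ∃ w : S, t * s = s * w := by
  obtain ⟨n, hn⟩ := spow_exists_idem s
  have hes : spow s n * s = s := h1 s n hn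
  set e := spow s n with he
  have hte : t * e = e * (t * e) := by rw [← mul_assoc, h2 e hn t]
  have heS : e = s * s ^ n := by rw [he, spow_eq, pow_succ']
  refine ⟨s ^ n * (t * e * s), ?_⟩
  calc t * s = t * (e * s) := by rw [hes]
    _ = (t * e) * s := by rw [mul_assoc]
    _ = e * (t * e) * s := by rw [← hte]
    _ = s * (s ^ n * (t * e * s)) := by rw [heS]; simp [mul_assoc]

/-- if `S` is a right regular band of groups which is a monoid and `c ∈ S`,
then `{s : c ∈ sS}` is a submonoid of `S`. -/
theorem stmt15 (S : Type*) [Monoid S] [Finite S]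
    (h1 : ∀ s : S, ∀ n : ℕ, spow s n * spow s n = spow s n → spow s n * s = s)
    (h2 : ∀ e : S, e * e = e → ∀ t : S, e * t * e = t * e)
    (c : S) :
    (1 : S) ∈ {s : S | ∃ x : S, c = s * x} ∧
    (∀ a ∈ {s : S | ∃ x : S, c = s * x}, ∀ b ∈ {s : S | ∃ x : S, c = s * x},
      a * b ∈ {s : S | ∃ x : S, c = s * x}) := by
  constructor
  · exact ⟨c, (one_mul c).symm⟩
  · rintro a ⟨x, hx⟩ b ⟨y, hy⟩
    obtain ⟨m, hm⟩ := spow_exists_idem c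
    have hfc : spow c m * c = c := h1 c m hm
    set f := spow c m with hf
    have hfa : f = a * (x * c ^ m) := by
      rw [hf, spow_eq, pow_succ', hx, mul_assoc]
    set v := x * c ^ m with hv
    obtain ⟨w, hw⟩ := left_mem h1 h2 v b
    refine ⟨w * y, ?_⟩
    calc c = f * c := hfc.symm
      _ = a * v * c := by rw [hfa]
      _ = a * (v * b * y) := by rw [hy]; simp [mul_assoc]
      _ = a * (b * w * y) := by rw [hw]
      _ = a * b * (w * y) := by simp [mul_assoc]
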